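/- Schwartz–Zippel lemma: Let R be an integral domain, S a finite subset of R, and f a nonzero polynomial in R[x_1,...,x_n] of total degree at most d. Then the number of points in S^n at which f vanishes is at most d * |S|^{n-1}. -/

import Mathlib

open MvPolynomial Finset

private theorem sz_aux {R : Type*} [CommRing R] [IsDomain R] [DecidableEq R]
    (S : Finset R) :
    ∀ (n : ℕ) (d : ℕ) (f : MvPolynomial (Fin n) R), f ≠ 0 → f.totalDegree ≤ d →
    ((Fintype.piFinset fun _ : Fin n => S).filter
        fun x => MvPolynomial.eval x f = 0).card * S.card ≤ d * S.card ^ n := by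
  intro n
  induction n with
  | zero =>
    intro d f hf hd
    obtain ⟨a, rfl⟩ := MvPolynomial.C_surjective (Fin 0) f
    have ha : a ≠ 0 := by simpa using hf
    simp [ha]
  | succ n ih =>
    intro d f hf hd
    classical
    set F := finSuccEquiv R n f with hFdef
    have hF : F ≠ 0 := by
      simpa [hFdef] using (map_ne_zero_iff _ (finSuccEquiv R n).injective).mpr hf
    set k := F.natDegree with hk
    set g := F.coeff k with hgdef
    have hg0 : g ≠ 0 := Polynomial.leadingCoeff_ne_zero.mpr hF
    have hdeg : g.totalDegree + k ≤ d :=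
      le_trans (totalDegree_coeff_finSuccEquiv_add_le f k hg0) hd
    have hkd : k ≤ d := le_trans (Nat.le_add_left k g.totalDegree) hdeg
    set A := ((Fintype.piFinset fun _ : Fin (n+1) => S).filter
        fun x => MvPolynomial.eval x f = 0) with hA
    set T := ((Fintype.piFinset fun _ : Fin n => S).filter
        fun y => MvPolynomial.eval y g = 0) with hT
    set B := A.filter (fun x => MvPolynomial.eval (Fin.tail x) g ≠ 0) with hB
    set C := A.filter (fun x => ¬ MvPolynomial.eval (Fin.tail x) g ≠ 0) with hC
    have hsplit : B.card + C.card = A.card :=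
      Finset.card_filter_add_card_filter_not _
    -- bound on B
    have hBcard : B.card ≤ k * S.card ^ n := by
      have := Finset.card_le_mul_card_image_of_maps_to
        (f := fun x => Fin.tail x) (s := B)
        (t := Fintype.piFinset fun _ : Fin n => S)
        (fun x hx => by
          rw [Fintype.mem_piFinset]
          intro i
          have hx' : x ∈ Fintype.piFinset fun _ : Fin (n+1) => S := by
            rw [hB, hA] at hx
            exact (Finset.mem_filter.mp (Finset.mem_filter.mp hx).1).1
          exact Fintype.mem_piFinset.mp hx' i.succ)
        k ?_
      · calc B.card ≤ k * (Fintype.piFinset fun _ : Fin n => S).card := this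
          _ = k * S.card ^ n := by simp [Fintype.card_piFinset]
      intro y hy
      by_cases hgy : MvPolynomial.eval y g = 0
      · have hempty : (B.filter fun x => Fin.tail x = y) = ∅ := by
          apply Finset.filter_false_of_mem
          intro x hx hxy
          rw [hB] at hx
          exact absurd (hxy ▸ hgy) (Finset.mem_filter.mp hx).2
        rw [hempty]
        simp
      · set p := Polynomial.map (MvPolynomial.eval y) F with hp
        have hpne : p ≠ 0 := by
          intro h
          apply hgy
          have : p.coeff k = MvPolynomial.eval y g := by
            rw [hp, Polynomial.coeff_map, hgdef]
          rw [h] at this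
          simpa using this.symm
        have hcard : p.roots.toFinset.card ≤ k := by
          calc p.roots.toFinset.card ≤ Multiset.card p.roots :=
                p.roots.toFinset_card_le
            _ ≤ p.natDegree := Polynomial.card_roots' p
            _ ≤ k := Polynomial.natDegree_map_le
        refine le_trans (Finset.card_le_card_of_injOn (fun x => x 0) ?_ ?_) hcard
        · intro x hx
          simp only [Finset.coe_filter, Set.mem_setOf_eq, Finset.mem_coe] at hx ⊢
          obtain ⟨hxB, hxy⟩ := hx
          rw [hB, Finset.mem_filter] at hxB
          obtain ⟨hxA, -⟩ := hxB
          rw [hA, Finset.mem_filter] at hxA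
          obtain ⟨-, hxz⟩ := hxA
          have heval : Polynomial.eval (x 0) p = 0 := by
            have h1 := eval_eq_eval_mv_eval' (Fin.tail x) (x 0) f
            rw [Fin.cons_self_tail, hxz] at h1
            rw [hp, ← hxy, hFdef]
            exact h1.symm
          rw [Multiset.mem_toFinset]
          exact Polynomial.mem_roots'.mpr ⟨hpne, heval⟩
        · intro x hx x' hx' h0
          simp only [Finset.coe_filter, Set.mem_setOf_eq] at hx hx'
          funext i
          refine Fin.cases ?_ ?_ i
          · exact h0
          · intro j
            exact congrFun (hx.2.trans hx'.2.symm) j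
    -- bound on C
    have hCcard : C.card ≤ S.card * T.card := by
      apply Finset.card_le_mul_card_image_of_maps_to
        (f := fun x => Fin.tail x) (s := C) (t := T)
      · intro x hx
        rw [hC, Finset.mem_filter] at hx
        obtain ⟨hxA, hxg⟩ := hx
        rw [hA, Finset.mem_filter] at hxA
        rw [hT, Finset.mem_filter]
        constructor
        · rw [Fintype.mem_piFinset]
          intro i
          exact Fintype.mem_piFinset.mp hxA.1 i.succ
        · exact not_not.mp hxg
      · intro y hy
        apply Finset.card_le_card_of_injOn (fun x => x 0)
        · intro x hx
          simp only [Finset.coe_filter, Set.mem_setOf_eq] at hx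
          have hxA : x ∈ A := (Finset.mem_filter.mp hx.1).1
          rw [hA, Finset.mem_filter] at hxA
          exact Fintype.mem_piFinset.mp hxA.1 0
        · intro x hx x' hx' h0
          simp only [Finset.coe_filter, Set.mem_setOf_eq] at hx hx'
          funext i
          refine Fin.cases ?_ ?_ i
          · exact h0
          · intro j
            exact congrFun (hx.2.trans hx'.2.symm) j
    have hTbound : T.card * S.card ≤ (d - k) * S.card ^ n :=
      ih (d - k) g hg0 (by omega)
    calc A.card * S.card = (B.card + C.card) * S.card := by rw [hsplit]
      _ = B.card * S.card + C.card * S.card := by ring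
      _ ≤ (k * S.card ^ n) * S.card + (S.card * T.card) * S.card := by
          gcongr
      _ = k * S.card ^ (n+1) + S.card * (T.card * S.card) := by ring
      _ ≤ k * S.card ^ (n+1) + S.card * ((d - k) * S.card ^ n) := by gcongr
      _ = (k + (d - k)) * S.card ^ (n+1) := by ring
      _ = d * S.card ^ (n+1) := by congr 1; omega


/-- Schwartz–Zippel lemma: a nonzero polynomial of total degree at most `d` over an
integral domain vanishes on at most `d * |S|^(n-1)` points of `S^n`. -/
theorem schwartz_zippel {R : Type*} [CommRing R] [IsDomain R] [DecidableEq R]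
    (n d : ℕ) (S : Finset R) (f : MvPolynomial (Fin n) R) (hf : f ≠ 0)
    (hd : f.totalDegree ≤ d) :
    ((Fintype.piFinset fun _ : Fin n => S).filter
        fun x => MvPolynomial.eval x f = 0).card ≤ d * S.card ^ (n - 1) := by
  classical
  cases n with
  | zero =>
    obtain ⟨a, rfl⟩ := MvPolynomial.C_surjective (Fin 0) f
    have ha : a ≠ 0 := by simpa using hf
    simp [ha]
  | succ m =>
    have h := sz_aux S (m + 1) d f hf hd
    rcases Nat.eq_zero_or_pos S.card with h0 | hpos
    · rw [Finset.card_eq_zero] at h0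
      subst h0
      simp
    · rw [pow_succ, ← mul_assoc] at h
      simpa using Nat.le_of_mul_le_mul_right h hpos
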